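/- Let A be a nonempty finite subset of a finite-dimensional real inner product space E and let β be the unique point of the convex hull of A closest to the origin. Then ⟨α, β⟩ ≥ ‖β‖² for every α ∈ A; moreover β lies in the convex hull of the subset A_β = {α ∈ A : ⟨α, β⟩ = ‖β‖²}, and β is also the unique point of the convex hull of A_β closest to the origin. -/

import Mathlib

open scoped RealInnerProductSpace

/-- Let A be a nonempty finite subset of a finite-dimensional real inner product space E and
let β be the unique point of the convex hull of A closest to the origin. Then ⟨α, β⟩ ≥ ‖β‖²
for every α ∈ A; moreover β lies in the convex hull of A_β = {α ∈ A : ⟨α, β⟩ = ‖β‖²}, and β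
is also the unique point of the convex hull of A_β closest to the origin. -/
theorem stmt_0 {E : Type*} [NormedAddCommGroup E] [InnerProductSpace ℝ E]
    [FiniteDimensional ℝ E] (A : Finset E) (hA : A.Nonempty) (β : E)
    (hβ : β ∈ convexHull ℝ (A : Set E))
    (hmin : ∀ y ∈ convexHull ℝ (A : Set E), ‖β‖ ≤ ‖y‖) :
    (∀ α ∈ A, ‖β‖ ^ 2 ≤ ⟪α, β⟫) ∧
    β ∈ convexHull ℝ {a : E | a ∈ A ∧ ⟪a, β⟫ = ‖β‖ ^ 2} ∧
    (∀ y ∈ convexHull ℝ {a : E | a ∈ A ∧ ⟪a, β⟫ = ‖β‖ ^ 2}, ‖β‖ ≤ ‖y‖) ∧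
    (∀ γ : E, γ ∈ convexHull ℝ {a : E | a ∈ A ∧ ⟪a, β⟫ = ‖β‖ ^ 2} →
      (∀ y ∈ convexHull ℝ {a : E | a ∈ A ∧ ⟪a, β⟫ = ‖β‖ ^ 2}, ‖γ‖ ≤ ‖y‖) → γ = β) := by
  classical
  set K : Set E := convexHull ℝ (A : Set E) with hKdef
  have hK : Convex ℝ K := convex_convexHull ℝ _
  -- variational inequality
  haveI : Nonempty K := ⟨⟨β, hβ⟩⟩
  have hinf : ‖(0 : E) - β‖ = ⨅ w : K, ‖(0 : E) - w‖ := by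
    refine le_antisymm (le_ciInf fun w => ?_) ?_
    · simpa using hmin w w.2
    · have hb : BddBelow (Set.range fun w : K => ‖(0 : E) - (w : E)‖) :=
        ⟨0, by rintro x ⟨w, rfl⟩; positivity⟩
      exact ciInf_le hb ⟨β, hβ⟩
  have hvar : ∀ w ∈ K, ⟪(0 : E) - β, w - β⟫ ≤ 0 :=
    (norm_eq_iInf_iff_real_inner_le_zero hK hβ).mp hinf
  have h1 : ∀ α ∈ A, ‖β‖ ^ 2 ≤ ⟪α, β⟫ := by
    intro α hα
    have := hvar α (subset_convexHull ℝ (A : Set E) hα)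
    rw [zero_sub, inner_sub_right, inner_neg_left, inner_neg_left] at this
    have hb : ⟪β, β⟫ = ‖β‖ ^ 2 := real_inner_self_eq_norm_sq β
    have hc : ⟪β, α⟫ = ⟪α, β⟫ := real_inner_comm α β
    linarith
  -- convex combination representation
  rw [hKdef, Finset.convexHull_eq] at hβ
  obtain ⟨w, hw0, hw1, hwc⟩ := hβ
  rw [Finset.centerMass_eq_of_sum_1 _ _ hw1] at hwc
  -- the equality set
  set S : Set E := {a : E | a ∈ A ∧ ⟪a, β⟫ = ‖β‖ ^ 2} with hSdef
  have hsum1 : ∑ a ∈ A, w a * ⟪a, β⟫ = ‖β‖ ^ 2 := by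
    have h' : ∑ a ∈ A, w a * ⟪a, β⟫ = ⟪∑ i ∈ A, w i • id i, β⟫ := by
      rw [sum_inner]
      simp [real_inner_smul_left]
    rw [h', hwc, real_inner_self_eq_norm_sq]
  have hsum2 : ∑ a ∈ A, w a * ‖β‖ ^ 2 = ‖β‖ ^ 2 := by
    rw [← Finset.sum_mul, hw1, one_mul]
  have hle : ∀ a ∈ A, w a * ‖β‖ ^ 2 ≤ w a * ⟪a, β⟫ := fun a ha =>
    mul_le_mul_of_nonneg_left (h1 a ha) (hw0 a ha)
  have heq : ∀ a ∈ A, w a * ‖β‖ ^ 2 = w a * ⟪a, β⟫ :=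
    (Finset.sum_eq_sum_iff_of_le hle).mp (by rw [hsum1, hsum2])
  have hsupp : ∀ a ∈ A, a ∉ S → w a = 0 := by
    intro a ha haS
    by_contra hwa
    exact haS ⟨ha, by
      have := heq a ha
      exact (mul_left_cancel₀ hwa this).symm⟩
  -- β ∈ convexHull S
  set A' : Finset E := A.filter (fun a => a ∈ S) with hA'
  have hwA' : ∑ a ∈ A', w a = 1 := by
    rw [← hw1]
    refine Finset.sum_subset (A.filter_subset _) ?_
    intro a ha haA'
    exact hsupp a ha (by simpa [hA', ha] using haA')
  have hcA' : ∑ a ∈ A', w a • a = β := by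
    rw [← hwc]
    refine Finset.sum_subset (A.filter_subset _) ?_
    intro a ha haA'
    rw [hsupp a ha (by simpa [hA', ha] using haA'), zero_smul]
  have h2 : β ∈ convexHull ℝ S := by
    have := Finset.centerMass_mem_convexHull (s := S) A'
      (fun a ha => hw0 a (A.filter_subset _ ha)) (by rw [hwA']; norm_num)
      (z := id) (fun a ha => by simpa [hA'] using (Finset.mem_filter.mp ha).2)
    rwa [Finset.centerMass_eq_of_sum_1 _ _ hwA', show ∑ a ∈ A', w a • id a = β from hcA'] at this
  have hSsub : S ⊆ (A : Set E) := fun a ha => ha.1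
  have h3 : ∀ y ∈ convexHull ℝ S, ‖β‖ ≤ ‖y‖ := fun y hy =>
    hmin y (convexHull_mono hSsub hy)
  refine ⟨h1, h2, h3, ?_⟩
  intro γ hγ hγmin
  have hγK : γ ∈ K := convexHull_mono hSsub hγ
  have hn1 : ‖γ‖ ≤ ‖β‖ := hγmin β h2
  have hn2 : ‖β‖ ≤ ‖γ‖ := hmin γ hγK
  have hn : ‖γ‖ = ‖β‖ := le_antisymm hn1 hn2
  have hmid : (1/2 : ℝ) • β + (1/2 : ℝ) • γ ∈ convexHull ℝ S :=
    (convex_convexHull ℝ S) h2 hγ (by norm_num) (by norm_num) (by norm_num)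
  have hmnorm : ‖β‖ ≤ ‖(1/2 : ℝ) • β + (1/2 : ℝ) • γ‖ := h3 _ hmid
  have hpar : ‖β + γ‖ ^ 2 + ‖β - γ‖ ^ 2 = 2 * (‖β‖ ^ 2 + ‖γ‖ ^ 2) := by
    have := parallelogram_law_with_norm ℝ β γ
    ring_nf
    ring_nf at this
    linarith
  have hms : ‖(1/2 : ℝ) • β + (1/2 : ℝ) • γ‖ = (1/2 : ℝ) * ‖β + γ‖ := by
    rw [← smul_add, norm_smul]
    norm_num
  have : ‖β - γ‖ ^ 2 ≤ 0 := by
    rw [hms] at hmnorm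
    nlinarith [norm_nonneg (β + γ), norm_nonneg β]
  have : β - γ = 0 := by
    have := sq_eq_zero_iff.mp (le_antisymm this (sq_nonneg _))
    simpa using this
  exact (sub_eq_zero.mp this).symm
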